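/- For every integer t ≥ 1 the availability probability satisfies the unrolled identity q(t) = 1 − z · ∑_{τ = max(1, t−d+1)}^{t−1} β(τ) · q(τ) (the sum being empty when t = 1). -/

import Mathlib

private lemma sum_split_bot (f : ℕ → ℝ) (a b : ℕ) (h : a ≤ b) :
    ∑ τ ∈ Finset.Icc a b, f τ = f a + ∑ τ ∈ Finset.Icc (a + 1) b, f τ := by
  rw [Finset.Icc_eq_cons_Ioc h, Finset.sum_cons, ← Finset.Icc_add_one_left_eq_Ioc]

private lemma sum_split_top (f : ℕ → ℝ) (a b : ℕ) (hb : 1 ≤ b) (h : a ≤ b) :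
    ∑ τ ∈ Finset.Icc a b, f τ = ∑ τ ∈ Finset.Icc a (b - 1), f τ + f b := by
  obtain ⟨c, rfl⟩ : ∃ c, b = c + 1 := ⟨b - 1, by omega⟩
  rw [Finset.sum_Icc_succ_top (by omega)]
  simp

/-- For the FI-CBB ex-ante availability probabilities `q` and non-skipping
probabilities `β` of an arm with blocking delay `d` and LP sampling mass `z ≤ 1/d`,
the unrolled identity
`q t = 1 - z * ∑_{τ = max(1, t-d+1)}^{t-1} β τ * q τ` holds for every `t ≥ 1`.
(In ℕ, truncated subtraction makes `t - d + 1` equal to `max(1, t-d+1)`.) -/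
theorem ficbb_availability_unrolled (d : ℕ) (hd : 1 ≤ d) (z : ℝ)
    (hz0 : 0 ≤ z) (hz1 : z ≤ 1 / (d : ℝ))
    (q β : ℕ → ℝ)
    (hq1 : q 1 = 1)
    (hβ : ∀ t, 1 ≤ t → β t = min 1 (((d : ℝ) / (2 * (d : ℝ) - 1)) / q t))
    (hrec : ∀ t, 1 ≤ t → q (t + 1) =
      q t * (1 - β t * z) +
        (if d ≤ t then q (t - d + 1) * β (t - d + 1) * z else 0)) :
    ∀ t, 1 ≤ t →
      q t = 1 - z * ∑ τ ∈ Finset.Icc (t - d + 1) (t - 1), β τ * q τ := by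
  intro t ht
  induction t with
  | zero => omega
  | succ n ih =>
    rcases Nat.lt_or_ge n 1 with hn | hn
    · -- n = 0, base case t = 1
      have hn0 : n = 0 := by omega
      subst hn0
      rw [show (0 : ℕ) + 1 - d + 1 = 1 from by omega,
        show (0 : ℕ) + 1 - 1 = 0 from rfl,
        Finset.Icc_eq_empty (by omega), Finset.sum_empty, hq1]
      ring
    · have ihn := ih hn
      have hr := hrec n hn
      by_cases hdn : d ≤ n
      · have e1 : n + 1 - 1 = n := by omega
        have e2 : n + 1 - d + 1 = n - d + 1 + 1 := by omega
        have hsum : ∑ τ ∈ Finset.Icc (n - d + 1 + 1) n, β τ * q τ =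
            (∑ τ ∈ Finset.Icc (n - d + 1) (n - 1), β τ * q τ)
              + β n * q n - β (n - d + 1) * q (n - d + 1) := by
          have h2 : n - d + 1 ≤ n := by omega
          have hbot := sum_split_bot (fun τ => β τ * q τ) (n - d + 1) n h2
          have htop := sum_split_top (fun τ => β τ * q τ) (n - d + 1) n hn h2
          beta_reduce at hbot htop
          linarith
        rw [hr, if_pos hdn, e1, e2, hsum]
        linear_combination ihn
      · have e1 : n + 1 - 1 = n := by omega
        have e2 : n + 1 - d + 1 = 1 := by omega
        have e3 : n - d + 1 = 1 := by omega
        have hsum : ∑ τ ∈ Finset.Icc 1 n, β τ * q τ =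
            (∑ τ ∈ Finset.Icc 1 (n - 1), β τ * q τ) + β n * q n := by
          have := sum_split_top (fun τ => β τ * q τ) 1 n hn hn
          simpa using this
        rw [hr, if_neg hdn, e1, e2, hsum]
        rw [e3] at ihn
        linear_combination ihn
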